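/- For all positive integers n, the determinant of the n×n Hankel matrix whose (i,j) entry is binomial(i+j+2, floor((i+j+2)/2)) equals n+1. -/

import Mathlib

open Finset Matrix

namespace CBH

/-- Entry of the lower-triangular factor. -/
def w (i k : ℕ) : ℤ := if k ≤ i then (i.choose ((i - k) / 2) : ℤ) else 0

lemma w_of_le {i k : ℕ} (h : k ≤ i) : w i k = (i.choose ((i - k) / 2) : ℤ) := if_pos h

lemma w_of_lt {i k : ℕ} (h : i < k) : w i k = 0 := if_neg (by omega)

lemma w_rec0 (i : ℕ) : w (i + 1) 0 = w i 0 + w i 1 := by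
  rcases Nat.even_or_odd i with ⟨t, ht⟩ | ⟨t, ht⟩
  · subst ht
    rcases Nat.eq_zero_or_pos t with rfl | hpos
    · simp [w]
    · obtain ⟨s, rfl⟩ : ∃ s, t = s + 1 := ⟨t - 1, by omega⟩
      rw [w_of_le (by omega), w_of_le (by omega), w_of_le (by omega)]
      have h1 : (s + 1 + (s + 1) + 1 - 0) / 2 = s + 1 := by omega
      have h2 : (s + 1 + (s + 1) - 0) / 2 = s + 1 := by omega
      have h3 : (s + 1 + (s + 1) - 1) / 2 = s := by omega
      rw [h1, h2, h3]
      have : (s + 1 + (s + 1) + 1).choose (s + 1)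
          = (s + 1 + (s + 1)).choose s + (s + 1 + (s + 1)).choose (s + 1) :=
        Nat.choose_succ_succ' _ _
      push_cast [this]; ring
  · subst ht
    rw [w_of_le (by omega), w_of_le (by omega), w_of_le (by omega)]
    have h1 : (2 * t + 1 + 1 - 0) / 2 = t + 1 := by omega
    have h2 : (2 * t + 1 - 0) / 2 = t := by omega
    have h3 : (2 * t + 1 - 1) / 2 = t := by omega
    rw [h1, h2, h3]
    have hp : (2 * t + 1 + 1).choose (t + 1)
        = (2 * t + 1).choose t + (2 * t + 1).choose (t + 1) := Nat.choose_succ_succ' _ _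
    have hs : (2 * t + 1).choose (t + 1) = (2 * t + 1).choose t := by
      have := Nat.choose_symm (show t ≤ 2 * t + 1 by omega)
      have h4 : 2 * t + 1 - t = t + 1 := by omega
      rw [h4] at this
      omega
    push_cast [hp, hs]; ring

lemma w_rec (i k : ℕ) : w (i + 1) (k + 1) = w i k + w i (k + 2) := by
  rcases lt_or_ge i k with h | h
  · rw [w_of_lt (by omega), w_of_lt (by omega), w_of_lt (by omega)]; ring
  rcases eq_or_lt_of_le h with rfl | h1
  · rw [w_of_le (by omega), w_of_le (by omega), w_of_lt (by omega)]
    simp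
  rcases eq_or_lt_of_le (show k + 1 ≤ i by omega) with h2 | h2
  · rw [w_of_le (by omega), w_of_le (by omega), w_of_lt (by omega)]
    have e1 : (i + 1 - (k + 1)) / 2 = 0 := by omega
    have e2 : (i - k) / 2 = 0 := by omega
    rw [e1, e2]; simp
  · -- k + 2 ≤ i
    rw [w_of_le (by omega), w_of_le (by omega), w_of_le (by omega)]
    obtain ⟨m, hm⟩ : ∃ m, (i - (k + 2)) / 2 = m := ⟨_, rfl⟩
    have e1 : (i + 1 - (k + 1)) / 2 = m + 1 := by omega
    have e2 : (i - k) / 2 = m + 1 := by omega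
    rw [e1, e2, hm]
    have : (i + 1).choose (m + 1) = i.choose m + i.choose (m + 1) := Nat.choose_succ_succ' _ _
    push_cast [this]; ring

lemma step (i j N : ℕ) (hi : i ≤ N) :
    ∑ k ∈ range (N + 2), w (i + 1) k * w j k
      = w i 0 * w j 0 + ((∑ k ∈ range (N + 2), w i k * w j (k + 1))
        + ∑ k ∈ range (N + 2), w i (k + 1) * w j k) := by
  rw [Finset.sum_range_succ' (fun k => w (i + 1) k * w j k) (N + 1),
      Finset.sum_range_succ' (fun k => w i (k + 1) * w j k) (N + 1),
      Finset.sum_range_succ (fun k => w i k * w j (k + 1)) (N + 1)]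
  have hrw : ∀ k ∈ range (N + 1),
      w (i + 1) (k + 1) * w j (k + 1) = w i k * w j (k + 1) + w i (k + 2) * w j (k + 1) := by
    intro k _; rw [w_rec, add_mul]
  rw [Finset.sum_congr rfl hrw, Finset.sum_add_distrib, w_rec0,
      w_of_lt (show i < N + 1 by omega)]
  ring

lemma transfer (i j N : ℕ) (hi : i ≤ N) (hj : j ≤ N) :
    ∑ k ∈ range (N + 2), w (i + 1) k * w j k
      = ∑ k ∈ range (N + 2), w i k * w (j + 1) k := by
  have h2 : ∑ k ∈ range (N + 2), w i k * w (j + 1) k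
      = ∑ k ∈ range (N + 2), w (j + 1) k * w i k :=
    Finset.sum_congr rfl fun k _ => mul_comm _ _
  rw [step i j N hi, h2, step j i N hj]
  have cA : ∑ k ∈ range (N + 2), w i k * w j (k + 1)
      = ∑ k ∈ range (N + 2), w j (k + 1) * w i k :=
    Finset.sum_congr rfl fun k _ => mul_comm _ _
  have cB : ∑ k ∈ range (N + 2), w i (k + 1) * w j k
      = ∑ k ∈ range (N + 2), w j k * w i (k + 1) :=
    Finset.sum_congr rfl fun k _ => mul_comm _ _
  rw [cA, cB]; ring

lemma key (i : ℕ) : ∀ j, ∑ k ∈ range (i + j + 2), w i k * w j k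
    = ((i + j).choose ((i + j) / 2) : ℤ) := by
  induction i with
  | zero =>
    intro j
    have h0 : (0 : ℕ) + j + 2 = (j + 1) + 1 := by omega
    rw [h0, Finset.sum_range_succ' (fun k => w 0 k * w j k) (j + 1)]
    have hz : ∀ k ∈ range (j + 1), w 0 (k + 1) * w j (k + 1) = 0 := by
      intro k _; rw [w_of_lt (by omega)]; ring
    rw [Finset.sum_congr rfl hz, Finset.sum_const_zero]
    rw [w_of_le (le_refl 0), w_of_le (Nat.zero_le j)]
    simp
  | succ i ih =>
    intro j
    have h0 : i + 1 + j + 2 = (i + j + 1) + 2 := by omega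
    rw [h0, transfer i j (i + j + 1) (by omega) (by omega)]
    have h1 : (i + j + 1) + 2 = i + (j + 1) + 2 := by omega
    rw [h1, ih (j + 1)]
    have h2 : i + (j + 1) = i + 1 + j := by omega
    rw [h2]

lemma pad (i j M N : ℕ) (hM : i < M) (hMN : M ≤ N) :
    ∑ k ∈ range N, w i k * w j k = ∑ k ∈ range M, w i k * w j k := by
  refine (Finset.sum_subset (Finset.range_subset_range.mpr hMN) ?_).symm
  intro k hk hk'
  rw [Finset.mem_range] at hk'
  rw [w_of_lt (by omega)]
  ring

lemma entry (i j N : ℕ) (hi : i < N) :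
    ∑ k ∈ range N, w i k * w j k = ((i + j).choose ((i + j) / 2) : ℤ) := by
  rcases le_or_gt N (i + j + 2) with h | h
  · rw [← pad i j N (i + j + 2) hi h, key i j]
  · rw [pad i j (i + j + 2) N (by omega) (by omega), key i j]

def eps (k : ℕ) : ℤ := (-1) ^ ((k + 1) / 2)

lemma eps_sq (k : ℕ) : eps k * eps k = 1 := by
  unfold eps
  rw [← pow_add]
  exact Even.neg_one_pow ⟨(k + 1) / 2, by ring⟩

lemma eps_two (k : ℕ) : eps (k + 2) = -eps k := by
  unfold eps
  have h : (k + 2 + 1) / 2 = (k + 1) / 2 + 1 := by omega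
  rw [h, pow_succ]; ring

lemma eps_zero : eps 0 = 1 := by simp [eps]

lemma eps_one : eps 1 = -1 := by simp [eps]

lemma esum (i N : ℕ) (hi : i ≤ N) :
    ∑ k ∈ range (N + 2), w i k * eps k = if i = 0 then 1 else 0 := by
  cases i with
  | zero =>
    rw [if_pos rfl, Finset.sum_range_succ' (fun k => w 0 k * eps k) (N + 1)]
    have hz : ∀ k ∈ range (N + 1), w 0 (k + 1) * eps (k + 1) = 0 := by
      intro k _; rw [w_of_lt (by omega)]; ring
    rw [Finset.sum_congr rfl hz, Finset.sum_const_zero]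
    rw [w_of_le (le_refl 0), eps_zero]
    simp
  | succ i =>
    rw [if_neg (by omega)]
    have hiN : i + 1 ≤ N := hi
    rw [Finset.sum_range_succ' (fun k => w (i + 1) k * eps k) (N + 1)]
    have hrw : ∀ k ∈ range (N + 1),
        w (i + 1) (k + 1) * eps (k + 1) = w i k * eps (k + 1) + w i (k + 2) * eps (k + 1) := by
      intro k _; rw [w_rec, add_mul]
    rw [Finset.sum_congr rfl hrw, Finset.sum_add_distrib, w_rec0]
    -- A := ∑_{range (N+1)} w i k * eps (k+1)
    have hA : ∑ k ∈ range (N + 1), w i k * eps (k + 1)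
        = -(∑ k ∈ range N, w i (k + 1) * eps k) + w i 0 * eps 1 := by
      rw [Finset.sum_range_succ' (fun k => w i k * eps (k + 1)) N]
      have : ∀ k ∈ range N, w i (k + 1) * eps (k + 1 + 1)
          = -(w i (k + 1) * eps k) := by
        intro k _
        have h2 : k + 1 + 1 = k + 2 := by omega
        rw [h2, eps_two]; ring
      rw [Finset.sum_congr rfl this, Finset.sum_neg_distrib]
    -- B := ∑_{range (N+1)} w i (k+2) * eps (k+1), with G over range (N+2)
    have hG : ∑ k ∈ range (N + 2), w i (k + 1) * eps k
        = (∑ k ∈ range (N + 1), w i (k + 2) * eps (k + 1)) + w i 1 * eps 0 :=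
      Finset.sum_range_succ' (fun k => w i (k + 1) * eps k) (N + 1)
    have hGtrunc : ∑ k ∈ range (N + 2), w i (k + 1) * eps k
        = ∑ k ∈ range N, w i (k + 1) * eps k := by
      rw [Finset.sum_range_succ (fun k => w i (k + 1) * eps k) (N + 1),
          Finset.sum_range_succ (fun k => w i (k + 1) * eps k) N,
          w_of_lt (show i < N + 1 by omega), w_of_lt (show i < N + 1 + 1 by omega)]
      ring
    have hB : ∑ k ∈ range (N + 1), w i (k + 2) * eps (k + 1)
        = (∑ k ∈ range N, w i (k + 1) * eps k) - w i 1 * eps 0 := by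
      rw [← hGtrunc] ; linarith [hG]
    rw [hA, hB]
    rw [eps_zero, eps_one]
    ring

end CBH
theorem central_binomial_hankel_det_shift_two (n : ℕ) (hn : 0 < n) :
    (Matrix.of fun i j : Fin n =>
      ((i.1 + j.1 + 2).choose ((i.1 + j.1 + 2) / 2) : ℤ)).det = (n : ℤ) + 1 := by
  classical
  set Wm : Matrix (Fin (n + 1)) (Fin (n + 1)) ℤ :=
    Matrix.of (fun i k : Fin (n + 1) => CBH.w i.1 k.1) with hWmdef
  have hdet : Wm.det = 1 := by
    rw [Matrix.det_of_lowerTriangular Wm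
      (by
        intro i j hij
        exact CBH.w_of_lt (show (i : ℕ) < j from hij))]
    have : ∀ i : Fin (n + 1), Wm i i = 1 := by
      intro i
      show CBH.w i.1 i.1 = 1
      rw [CBH.w_of_le (le_refl _), Nat.sub_self]
      simp
    simp [this]
  have hWc : Wm *ᵥ (fun k : Fin (n + 1) => CBH.eps k.1) = Pi.single 0 1 := by
    funext i
    have hmv : (Wm *ᵥ (fun k : Fin (n + 1) => CBH.eps k.1)) i
        = ∑ k : Fin (n + 1), CBH.w i.1 k.1 * CBH.eps k.1 := rfl
    rw [hmv, Fin.sum_univ_eq_sum_range (fun k => CBH.w i.1 k * CBH.eps k) (n + 1)]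
    have hpad : ∑ k ∈ Finset.range (n + 1), CBH.w i.1 k * CBH.eps k
        = ∑ k ∈ Finset.range (i.1 + 2), CBH.w i.1 k * CBH.eps k := by
      rcases le_or_gt (n + 1) (i.1 + 2) with h | h
      · refine Finset.sum_subset (Finset.range_subset_range.mpr h) ?_
        intro k hk hk'
        rw [Finset.mem_range] at hk'
        rw [CBH.w_of_lt (by omega)]
        ring
      · refine (Finset.sum_subset (Finset.range_subset_range.mpr (le_of_lt h)) ?_).symm
        intro k hk hk'
        rw [Finset.mem_range] at hk'
        rw [CBH.w_of_lt (by omega)]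
        ring
    rw [hpad, CBH.esum i.1 i.1 (le_refl _), Pi.single_apply]
    by_cases h0 : i = 0
    · rw [if_pos (by simp [h0]), if_pos h0]
    · rw [if_neg (fun h => h0 (Fin.ext (by rw [h]; simp))), if_neg h0]
  have hadj : ∀ k : Fin (n + 1), Wm.adjugate k 0 = CBH.eps k.1 := by
    have h1 : Wm.adjugate * Wm = 1 := by
      rw [Matrix.adjugate_mul, hdet, one_smul]
    have h2 : (fun k : Fin (n + 1) => CBH.eps k.1) = Wm.adjugate *ᵥ Pi.single 0 1 := by
      rw [← hWc, Matrix.mulVec_mulVec, h1, Matrix.one_mulVec]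
    intro k
    have h3 := congrFun h2 k
    rw [Matrix.mulVec_single] at h3
    simpa using h3.symm
  -- the Hankel matrix as a submatrix of Wm * Wmᵀ
  have hH : ∀ i j : Fin (n + 1),
      (Wm * Wmᵀ) i j = ((i.1 + j.1).choose ((i.1 + j.1) / 2) : ℤ) := by
    intro i j
    rw [Matrix.mul_apply]
    have : ∀ k : Fin (n + 1), Wm i k * Wmᵀ k j = CBH.w i.1 k.1 * CBH.w j.1 k.1 := by
      intro k; rfl
    rw [Finset.sum_congr rfl (fun k _ => this k),
      Fin.sum_univ_eq_sum_range (fun k => CBH.w i.1 k * CBH.w j.1 k) (n + 1)]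
    exact CBH.entry i.1 j.1 (n + 1) i.isLt
  have hsub : (Matrix.of fun i j : Fin n =>
      ((i.1 + j.1 + 2).choose ((i.1 + j.1 + 2) / 2) : ℤ))
      = (Wm * Wmᵀ).submatrix Fin.succ Fin.succ := by
    ext i j
    show ((i.1 + j.1 + 2).choose ((i.1 + j.1 + 2) / 2) : ℤ)
        = (Wm * Wmᵀ) (Fin.succ i) (Fin.succ j)
    rw [hH]
    have hv : (Fin.succ i : ℕ) + (Fin.succ j : ℕ) = i.1 + j.1 + 2 := by
      rw [Fin.val_succ, Fin.val_succ]; omega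
    rw [hv]
  rw [hsub]
  have hminor : ((Wm * Wmᵀ).submatrix Fin.succ Fin.succ).det
      = (Wm * Wmᵀ).adjugate 0 0 := by
    rw [Matrix.adjugate_apply, Matrix.det_succ_row_zero]
    rw [Finset.sum_eq_single (0 : Fin (n + 1))]
    · rw [Matrix.updateRow_self, Fin.succAbove_zero]
      have : ((Wm * Wmᵀ).updateRow 0 (Pi.single 0 1)).submatrix Fin.succ Fin.succ
          = (Wm * Wmᵀ).submatrix Fin.succ Fin.succ := by
        ext i j
        rw [Matrix.submatrix_apply, Matrix.submatrix_apply,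
          Matrix.updateRow_ne (Fin.succ_ne_zero i)]
      rw [this]
      simp
    · intro b _ hb
      rw [Matrix.updateRow_self, Pi.single_eq_of_ne hb]
      ring
    · intro h; exact absurd (Finset.mem_univ _) h
  rw [hminor, Matrix.adjugate_mul_distrib, ← Matrix.adjugate_transpose,
    Matrix.mul_apply]
  have : ∀ k : Fin (n + 1),
      (Wm.adjugate)ᵀ 0 k * Wm.adjugate k 0 = 1 := by
    intro k
    rw [Matrix.transpose_apply, hadj k]
    exact CBH.eps_sq k.1
  rw [Finset.sum_congr rfl (fun k _ => this k), Finset.sum_const]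
  simp
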